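/- Let A be a positive operator on H and T, S A-bounded operators with TS = ST. Then r_A(TS) ≤ ½(ω_A(TS) + ‖T‖_A^{1/2} ‖S‖_A^{1/2} ‖TS‖_A^{1/2}) and r_A(TS) ≤ ½(ω_A(TS) + min{‖T‖_A ‖S²‖_A^{1/2}, ‖T²‖_A^{1/2} ‖S‖_A}). -/

import Mathlib

open ContinuousLinearMap

variable {H : Type*} [NormedAddCommGroup H] [InnerProductSpace ℂ H] [CompleteSpace H]

/-- The seminorm `‖x‖_A = ‖A^{1/2} x‖ = √⟨Ax, x⟩` induced by a positive operator `A`. -/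
noncomputable def anorm (A : H →L[ℂ] H) (x : H) : ℝ :=
  Real.sqrt (A.reApplyInnerSelf x)

/-- `T` is `A`-bounded: `‖Tx‖_A ≤ c ‖x‖_A` for some `c > 0`. -/
def ABounded (A T : H →L[ℂ] H) : Prop :=
  ∃ c : ℝ, 0 < c ∧ ∀ x : H, anorm A (T x) ≤ c * anorm A x

/-- The operator seminorm `‖T‖_A`: the least `c ≥ 0` with `‖Tx‖_A ≤ c ‖x‖_A` for all `x`. -/
noncomputable def aNorm (A T : H →L[ℂ] H) : ℝ :=
  sInf {c : ℝ | 0 ≤ c ∧ ∀ x : H, anorm A (T x) ≤ c * anorm A x}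

/-- The `A`-spectral radius `r_A(T) = inf_{n ≥ 1} ‖T^n‖_A^{1/n}`. -/
noncomputable def aSpecRad (A T : H →L[ℂ] H) : ℝ :=
  ⨅ n : ℕ+, aNorm A (T ^ (n : ℕ)) ^ ((n : ℝ)⁻¹)

/-- The `A`-numerical radius `ω_A(T) = sup {|⟨ATx, x⟩| : ‖x‖_A = 1}`. -/
noncomputable def aNumRad (A T : H →L[ℂ] H) : ℝ :=
  sSup {c : ℝ | ∃ x : H, anorm A x = 1 ∧ c = ‖(inner ℂ (A (T x)) x : ℂ)‖}

set_option maxHeartbeats 1000000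
set_option synthInstance.maxHeartbeats 400000
set_option linter.unusedSectionVars false
set_option linter.unusedVariables false
set_option linter.deprecated false

namespace Stmt17

variable {A B : H →L[ℂ] H}

lemma inner_eq (hBsa : IsSelfAdjoint B) (hBB : B * B = A) (x y : H) :
    (inner ℂ (A x) y : ℂ) = inner ℂ (B x) (B y) := by
  have : A x = B (B x) := by rw [← hBB]; rfl
  rw [this]; exact hBsa.isSymmetric (B x) y

lemma anorm_eq (hBsa : IsSelfAdjoint B) (hBB : B * B = A) (x : H) :
    anorm A x = ‖B x‖ := by
  rw [anorm, reApplyInnerSelf]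
  rw [inner_eq hBsa hBB x x, inner_self_eq_norm_sq (𝕜 := ℂ) (B x)]
  exact Real.sqrt_sq (norm_nonneg _)

lemma aNorm_nonneg (A Z : H →L[ℂ] H) : 0 ≤ aNorm A Z :=
  Real.sInf_nonneg fun _ h => h.1

lemma bddBelow_aux (A Z : H →L[ℂ] H) :
    BddBelow {c : ℝ | 0 ≤ c ∧ ∀ x : H, anorm A (Z x) ≤ c * anorm A x} :=
  ⟨0, fun _ h => h.1⟩

lemma anorm_nonneg (A : H →L[ℂ] H) (x : H) : 0 ≤ anorm A x := Real.sqrt_nonneg _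

lemma aNorm_le {Z : H →L[ℂ] H} {c : ℝ} (h0 : 0 ≤ c)
    (h : ∀ x, anorm A (Z x) ≤ c * anorm A x) : aNorm A Z ≤ c :=
  csInf_le (bddBelow_aux A Z) ⟨h0, h⟩

lemma aNorm_spec {Z : H →L[ℂ] H} (hZ : ABounded A Z) (x : H) :
    anorm A (Z x) ≤ aNorm A Z * anorm A x := by
  obtain ⟨c₀, hc₀, hb⟩ := hZ
  rcases eq_or_lt_of_le (anorm_nonneg A x) with h0 | hpos
  · have h1 : anorm A (Z x) ≤ 0 := by
      have := hb x; rw [← h0] at this; simpa using this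
    have h2 : aNorm A Z * anorm A x = 0 := by rw [← h0, mul_zero]
    rw [h2]; exact h1
  · rw [← div_le_iff₀ hpos] at *
    refine le_csInf ⟨c₀, hc₀.le, hb⟩ fun c hc => ?_
    rw [div_le_iff₀ hpos]
    exact hc.2 x

lemma _root_.ABounded.mul {Z₁ Z₂ : H →L[ℂ] H} (h₁ : ABounded A Z₁) (h₂ : ABounded A Z₂) :
    ABounded A (Z₁ * Z₂) := by
  obtain ⟨c₁, hc₁, hb₁⟩ := h₁
  obtain ⟨c₂, hc₂, hb₂⟩ := h₂
  refine ⟨c₁ * c₂, mul_pos hc₁ hc₂, fun x => ?_⟩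
  calc anorm A (Z₁ (Z₂ x)) ≤ c₁ * anorm A (Z₂ x) := hb₁ _
    _ ≤ c₁ * (c₂ * anorm A x) := by
        exact mul_le_mul_of_nonneg_left (hb₂ x) hc₁.le
    _ = c₁ * c₂ * anorm A x := by ring

lemma aNorm_mul_le {Z₁ Z₂ : H →L[ℂ] H} (h₁ : ABounded A Z₁) (h₂ : ABounded A Z₂) :
    aNorm A (Z₁ * Z₂) ≤ aNorm A Z₁ * aNorm A Z₂ := by
  refine aNorm_le (mul_nonneg (aNorm_nonneg A Z₁) (aNorm_nonneg A Z₂)) fun x => ?_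
  calc anorm A (Z₁ (Z₂ x)) ≤ aNorm A Z₁ * anorm A (Z₂ x) := aNorm_spec h₁ _
    _ ≤ aNorm A Z₁ * (aNorm A Z₂ * anorm A x) :=
        mul_le_mul_of_nonneg_left (aNorm_spec h₂ x) (aNorm_nonneg A Z₁)
    _ = aNorm A Z₁ * aNorm A Z₂ * anorm A x := by ring

lemma anorm_smul (hBsa : IsSelfAdjoint B) (hBB : B * B = A) (c : ℂ) (x : H) :
    anorm A (c • x) = ‖c‖ * anorm A x := by
  rw [anorm_eq hBsa hBB, anorm_eq hBsa hBB, map_smul, norm_smul]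

lemma aNumRad_nonneg (A Z : H →L[ℂ] H) : 0 ≤ aNumRad A Z :=
  Real.sSup_nonneg fun c hc => by obtain ⟨x, -, rfl⟩ := hc; exact norm_nonneg _

lemma bddAbove_numSet (hBsa : IsSelfAdjoint B) (hBB : B * B = A) {Z : H →L[ℂ] H}
    (hZ : ABounded A Z) :
    BddAbove {c : ℝ | ∃ x : H, anorm A x = 1 ∧ c = ‖(inner ℂ (A (Z x)) x : ℂ)‖} := by
  refine ⟨aNorm A Z, fun c hc => ?_⟩
  obtain ⟨x, hx, rfl⟩ := hc
  rw [inner_eq hBsa hBB]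
  calc ‖(inner ℂ (B (Z x)) (B x) : ℂ)‖ ≤ ‖B (Z x)‖ * ‖B x‖ := norm_inner_le_norm _ _
    _ = anorm A (Z x) * anorm A x := by rw [anorm_eq hBsa hBB, anorm_eq hBsa hBB]
    _ ≤ (aNorm A Z * anorm A x) * anorm A x :=
        mul_le_mul_of_nonneg_right (aNorm_spec hZ x) (anorm_nonneg A x)
    _ = aNorm A Z := by rw [hx]; ring

lemma norm_inner_le_aNumRad (hBsa : IsSelfAdjoint B) (hBB : B * B = A) {Z : H →L[ℂ] H}
    (hZ : ABounded A Z) (x : H) :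
    ‖(inner ℂ (A (Z x)) x : ℂ)‖ ≤ aNumRad A Z * anorm A x ^ 2 := by
  rcases eq_or_lt_of_le (anorm_nonneg A x) with h0 | hpos
  · have hBx : ‖B x‖ = 0 := by rw [← anorm_eq hBsa hBB, ← h0]
    rw [inner_eq hBsa hBB]
    calc ‖(inner ℂ (B (Z x)) (B x) : ℂ)‖ ≤ ‖B (Z x)‖ * ‖B x‖ := norm_inner_le_norm _ _
      _ = 0 := by rw [hBx, mul_zero]
      _ ≤ aNumRad A Z * anorm A x ^ 2 := by
          rw [← h0]; simp
  · set t : ℝ := anorm A x with ht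
    have htne : (t : ℂ) ≠ 0 := by
      exact_mod_cast ne_of_gt hpos
    set u : H := ((t : ℂ)⁻¹) • x with hu
    have hu1 : anorm A u = 1 := by
      rw [hu, anorm_smul hBsa hBB, norm_inv, Complex.norm_real, Real.norm_eq_abs,
        abs_of_pos hpos, ← ht, inv_mul_cancel₀ (ne_of_gt hpos)]
    have hxu : x = (t : ℂ) • u := by
      rw [hu, smul_smul, mul_inv_cancel₀ htne, one_smul]
    have key : (inner ℂ (A (Z x)) x : ℂ)
        = (starRingEnd ℂ) (t : ℂ) * ((t : ℂ) * inner ℂ (A (Z u)) u) := by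
      conv_lhs => rw [hxu]
      rw [map_smul, map_smul, inner_smul_left, inner_smul_right]
    rw [key]
    have hle : ‖(inner ℂ (A (Z u)) u : ℂ)‖ ≤ aNumRad A Z :=
      le_csSup (bddAbove_numSet hBsa hBB hZ) ⟨u, hu1, rfl⟩
    have : ‖(starRingEnd ℂ) (t:ℂ) * ((t:ℂ) * inner ℂ (A (Z u)) u)‖
        = t * (t * ‖(inner ℂ (A (Z u)) u : ℂ)‖) := by
      rw [norm_mul, norm_mul, RCLike.norm_conj, Complex.norm_real, Real.norm_eq_abs,
        abs_of_pos hpos]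
    rw [this]
    calc t * (t * ‖(inner ℂ (A (Z u)) u : ℂ)‖) ≤ t * (t * aNumRad A Z) := by
          exact mul_le_mul_of_nonneg_left (mul_le_mul_of_nonneg_left hle hpos.le) hpos.le
      _ = aNumRad A Z * t ^ 2 := by ring

section Hilbert

variable {K : Type*} [NormedAddCommGroup K] [InnerProductSpace ℂ K] [CompleteSpace K]

lemma spectralRadius_le_of_inner (W : K →L[ℂ] K) {M : ℝ} (hM : 0 ≤ M)
    (h : ∀ u : K, ‖(inner ℂ (W u) u : ℂ)‖ ≤ M * ‖u‖ ^ 2) :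
    spectralRadius ℂ W ≤ ENNReal.ofReal M := by
  rw [spectralRadius]
  refine iSup₂_le fun lam hlam => ?_
  by_contra hcon
  push_neg at hcon
  rw [← enorm_eq_nnnorm, ← ofReal_norm] at hcon
  have hMlam : M < ‖lam‖ := (ENNReal.ofReal_lt_ofReal_iff_of_nonneg hM).1 hcon
  have hunit : IsUnit (algebraMap ℂ (K →L[ℂ] K) lam - W) := by
    have hcpos : (0:ℝ) < ‖lam‖ - M := by linarith
    refine ContinuousLinearMap.isUnit_of_forall_le_norm_inner_map _
      (c := ⟨‖lam‖ - M, hcpos.le⟩) (by exact_mod_cast hcpos) fun u => ?_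
    have h1 : (inner ℂ ((algebraMap ℂ (K →L[ℂ] K) lam - W) u) u : ℂ)
        = (starRingEnd ℂ) lam * (inner ℂ u u) - inner ℂ (W u) u := by
      simp only [ContinuousLinearMap.sub_apply, inner_sub_left,
        Algebra.algebraMap_eq_smul_one, ContinuousLinearMap.smul_apply,
        ContinuousLinearMap.one_apply, inner_smul_left]
    rw [h1]
    have h2 : ‖(starRingEnd ℂ) lam * (inner ℂ u u : ℂ)‖ = ‖lam‖ * ‖u‖ ^ 2 := by
      rw [norm_mul, RCLike.norm_conj, inner_self_eq_norm_sq_to_K (𝕜 := ℂ) u]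
      norm_num
    calc ‖u‖ ^ 2 * (⟨‖lam‖ - M, hcpos.le⟩ : NNReal)
        = ‖lam‖ * ‖u‖ ^ 2 - M * ‖u‖ ^ 2 := by
          simp only [NNReal.coe_mk]; ring
      _ ≤ ‖(starRingEnd ℂ) lam * (inner ℂ u u : ℂ)‖ - ‖(inner ℂ (W u) u : ℂ)‖ := by
          rw [h2]; have := h u; linarith
      _ ≤ ‖(starRingEnd ℂ) lam * (inner ℂ u u : ℂ) - inner ℂ (W u) u‖ :=
          norm_sub_norm_le _ _
  exact (spectrum.mem_iff.mp hlam) hunit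

lemma exists_pow_rpow_le (W : K →L[ℂ] K) {M ε : ℝ} (hM : 0 ≤ M)
    (hsp : spectralRadius ℂ W ≤ ENNReal.ofReal M) (hε : 0 < ε) :
    ∃ n : ℕ, 0 < n ∧ ‖W ^ n‖ ^ ((n : ℝ)⁻¹) ≤ M + ε := by
  have htend := spectrum.pow_nnnorm_pow_one_div_tendsto_nhds_spectralRadius W
  have hlt : spectralRadius ℂ W < ENNReal.ofReal (M + ε) :=
    lt_of_le_of_lt hsp (by rw [ENNReal.ofReal_lt_ofReal_iff (by linarith)]; linarith)
  have hev := Filter.Tendsto.eventually_lt_const hlt htend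
  obtain ⟨n, hn, hn1⟩ := (hev.and (Filter.eventually_ge_atTop 1)).exists
  refine ⟨n, hn1, ?_⟩
  have hy : (0:ℝ) ≤ 1 / (n:ℝ) := by positivity
  rw [← ENNReal.coe_rpow_of_nonneg _ hy,
    ENNReal.ofReal_eq_coe_nnreal (show (0:ℝ) ≤ M + ε by linarith), ENNReal.coe_lt_coe] at hn
  have hn' := NNReal.coe_lt_coe.2 hn
  rw [NNReal.coe_rpow, coe_nnnorm, NNReal.coe_mk, one_div] at hn'
  exact hn'.le

end Hilbert

section Construction

variable (B : H →L[ℂ] H)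

noncomputable def Ksp : Submodule ℂ H := (LinearMap.range (B : H →ₗ[ℂ] H)).topologicalClosure

instance : CompleteSpace (Ksp B) :=
  (Submodule.isClosed_topologicalClosure _).completeSpace_coe

lemma hmemK (x : H) : B x ∈ Ksp B :=
  Submodule.le_topologicalClosure _ (LinearMap.mem_range_self (B : H →ₗ[ℂ] H) x)

noncomputable def inclK : (LinearMap.range (B : H →ₗ[ℂ] H)) →L[ℂ] Ksp B :=
  LinearMap.mkContinuous
    (Submodule.inclusion (Submodule.le_topologicalClosure _)) 1
    (fun x => by
      simp only [one_mul]
      rfl)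

@[simp] lemma inclK_coe (d : LinearMap.range (B : H →ₗ[ℂ] H)) : ((inclK B d : Ksp B) : H) = (d : H) := rfl

lemma isometry_inclK : Isometry (inclK B) :=
  AddMonoidHomClass.isometry_of_norm _ (fun x => rfl)

lemma denseRange_inclK : DenseRange (inclK B) := by
  intro u
  have hu : (u : H) ∈ closure ((LinearMap.range (B : H →ₗ[ℂ] H) : Submodule ℂ H) : Set H) := u.2
  rw [mem_closure_iff_seq_limit] at hu
  obtain ⟨f, hf, hftend⟩ := hu
  have h1 : Filter.Tendsto (fun n : ℕ => inclK B ⟨f n, hf n⟩) Filter.atTop (nhds u) := by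
    rw [Topology.IsEmbedding.subtypeVal.tendsto_nhds_iff]
    exact hftend
  exact mem_closure_of_tendsto h1 (Filter.Eventually.of_forall fun n => Set.mem_range_self _)

lemma dense_BK : Dense (Set.range (fun x : H => (⟨B x, hmemK B x⟩ : Ksp B))) := by
  have hsurj : Function.Surjective (fun x : H => (⟨B x, LinearMap.mem_range_self (B : H →ₗ[ℂ] H) x⟩ :
      LinearMap.range (B : H →ₗ[ℂ] H))) := fun d => by
    obtain ⟨y, hy⟩ := LinearMap.mem_range.1 d.2
    exact ⟨y, Subtype.ext hy⟩
  have : (fun x : H => (⟨B x, hmemK B x⟩ : Ksp B)) =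
      (inclK B) ∘ (fun x : H => (⟨B x, LinearMap.mem_range_self (B : H →ₗ[ℂ] H) x⟩ : LinearMap.range (B : H →ₗ[ℂ] H))) := by
    funext x; rfl
  rw [this]
  exact DenseRange.comp (denseRange_inclK B) hsurj.denseRange (inclK B).continuous

variable {A : H →L[ℂ] H} {B}

lemma exists_Wop (hBsa : IsSelfAdjoint B) (hBB : B * B = A) {Z : H →L[ℂ] H}
    (hZ : ABounded A Z) :
    ∃ W : Ksp B →L[ℂ] Ksp B, ∀ x : H, ((W ⟨B x, hmemK B x⟩ : Ksp B) : H) = B (Z x) := by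
  obtain ⟨c, hc, hb⟩ := hZ
  -- well-definedness
  have hw : ∀ x y : H, B x = B y → B (Z x) = B (Z y) := by
    intro x y hxy
    have h1 : anorm A (Z (x - y)) ≤ c * anorm A (x - y) := hb _
    rw [anorm_eq hBsa hBB, anorm_eq hBsa hBB] at h1
    have h2 : B (x - y) = 0 := by rw [map_sub, hxy, sub_self]
    rw [h2, norm_zero, mul_zero] at h1
    have h3 : Z (x - y) = Z x - Z y := map_sub _ _ _
    rw [h3, map_sub] at h1
    have := le_antisymm h1 (norm_nonneg _)
    rwa [norm_eq_zero, sub_eq_zero] at this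
  have hbd : ∀ x : H, ‖B (Z x)‖ ≤ c * ‖B x‖ := by
    intro x
    have := hb x
    rwa [anorm_eq hBsa hBB, anorm_eq hBsa hBB] at this
  -- the raw map on range B
  have hkey : ∀ (d : LinearMap.range (B : H →ₗ[ℂ] H)) (x : H), B x = (d : H) →
      B (Z (LinearMap.mem_range.1 d.2).choose) = B (Z x) := by
    intro d x hx
    exact hw _ _ ((LinearMap.mem_range.1 d.2).choose_spec.trans hx.symm)
  let g₀ : LinearMap.range (B : H →ₗ[ℂ] H) → Ksp B :=
    fun d => ⟨B (Z (LinearMap.mem_range.1 d.2).choose), hmemK B _⟩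
  have hg₀ : ∀ (d : LinearMap.range (B : H →ₗ[ℂ] H)) (x : H), B x = (d : H) → (g₀ d : H) = B (Z x) :=
    fun d x hx => hkey d x hx
  have hadd : ∀ d d' : LinearMap.range (B : H →ₗ[ℂ] H), g₀ (d + d') = g₀ d + g₀ d' := by
    intro d d'
    obtain ⟨x, hx⟩ := LinearMap.mem_range.1 d.2
    obtain ⟨x', hx'⟩ := LinearMap.mem_range.1 d'.2
    apply Subtype.ext
    have hsum : B (x + x') = ((d + d' : LinearMap.range (B : H →ₗ[ℂ] H)) : H) := by
      rw [map_add]; exact congrArg₂ (· + ·) hx hx'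
    calc ((g₀ (d + d') : Ksp B) : H) = B (Z (x + x')) := hg₀ _ _ hsum
      _ = B (Z x) + B (Z x') := by rw [map_add, map_add]
      _ = ((g₀ d + g₀ d' : Ksp B) : H) := by
          rw [Submodule.coe_add, hg₀ d x hx, hg₀ d' x' hx']
  have hsmul : ∀ (a : ℂ) (d : LinearMap.range (B : H →ₗ[ℂ] H)), g₀ (a • d) = a • g₀ d := by
    intro a d
    obtain ⟨x, hx⟩ := LinearMap.mem_range.1 d.2
    apply Subtype.ext
    have hs : B (a • x) = ((a • d : LinearMap.range (B : H →ₗ[ℂ] H)) : H) := by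
      rw [map_smul]; exact congrArg (a • ·) hx
    calc ((g₀ (a • d) : Ksp B) : H) = B (Z (a • x)) := hg₀ _ _ hs
      _ = a • B (Z x) := by rw [map_smul, map_smul]
      _ = ((a • g₀ d : Ksp B) : H) := by rw [Submodule.coe_smul, hg₀ d x hx]
  let g₁ : LinearMap.range (B : H →ₗ[ℂ] H) →ₗ[ℂ] Ksp B :=
    { toFun := g₀, map_add' := hadd, map_smul' := hsmul }
  have hgbd : ∀ d : LinearMap.range (B : H →ₗ[ℂ] H), ‖g₁ d‖ ≤ c * ‖d‖ := by
    intro d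
    obtain ⟨x, hx⟩ := LinearMap.mem_range.1 d.2
    have h1 : ‖g₁ d‖ = ‖B (Z x)‖ := by
      have he : ((g₁ d : Ksp B) : H) = B (Z x) := hg₀ d x hx
      calc ‖g₁ d‖ = ‖((g₁ d : Ksp B) : H)‖ := rfl
        _ = ‖B (Z x)‖ := by rw [he]
    have h2 : ‖d‖ = ‖B x‖ := by
      calc ‖d‖ = ‖(d : H)‖ := rfl
        _ = ‖B x‖ := by rw [← hx]; rfl
    rw [h1, h2]
    exact hbd x
  let g : LinearMap.range (B : H →ₗ[ℂ] H) →L[ℂ] Ksp B := g₁.mkContinuous c hgbd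
  refine ⟨g.extend (inclK B), fun x => ?_⟩
  have h1 : (⟨B x, hmemK B x⟩ : Ksp B) = inclK B ⟨B x, LinearMap.mem_range_self (B : H →ₗ[ℂ] H) x⟩ := rfl
  rw [h1, ContinuousLinearMap.extend_eq (h_dense := denseRange_inclK B)
    (h_e := (isometry_inclK B).isUniformInducing)]
  exact hg₀ _ x rfl

end Construction

lemma bddBelow_specSet (A Y : H →L[ℂ] H) :
    BddBelow (Set.range fun n : ℕ+ => aNorm A (Y ^ (n : ℕ)) ^ ((n : ℝ)⁻¹)) := by
  refine ⟨0, ?_⟩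
  rintro r ⟨m, rfl⟩
  exact Real.rpow_nonneg (aNorm_nonneg _ _) _

lemma aSpecRad_le_aNumRad (hBsa : IsSelfAdjoint B) (hBB : B * B = A) {Y : H →L[ℂ] H}
    (hY : ABounded A Y) : aSpecRad A Y ≤ aNumRad A Y := by
  obtain ⟨W, hW⟩ := exists_Wop hBsa hBB hY
  have hWn : ∀ (n : ℕ) (x : H), (((W ^ n) ⟨B x, hmemK B x⟩ : Ksp B) : H) = B ((Y ^ n) x) := by
    intro n
    induction n with
    | zero => intro x; simp
    | succ n ih =>
      intro x
      have hWx : W ⟨B x, hmemK B x⟩ = ⟨B (Y x), hmemK B (Y x)⟩ := Subtype.ext (hW x)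
      have h1 : (W ^ (n+1)) ⟨B x, hmemK B x⟩ = (W ^ n) (W ⟨B x, hmemK B x⟩) := by
        rw [pow_succ]; rfl
      rw [h1, hWx, ih (Y x)]
      congr 1
  have hnorm : ∀ n : ℕ, aNorm A (Y ^ n) ≤ ‖W ^ n‖ := by
    intro n
    refine aNorm_le (W ^ n).opNorm_nonneg fun x => ?_
    have h1 : anorm A ((Y ^ n) x) = ‖(W ^ n) ⟨B x, hmemK B x⟩‖ := by
      rw [anorm_eq hBsa hBB, ← hWn n x]; rfl
    have h2 : anorm A x = ‖(⟨B x, hmemK B x⟩ : Ksp B)‖ := by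
      rw [anorm_eq hBsa hBB]; rfl
    rw [h1, h2]
    exact (W ^ n).le_opNorm _
  have hnum : ∀ u : Ksp B, ‖(inner ℂ (W u) u : ℂ)‖ ≤ aNumRad A Y * ‖u‖ ^ 2 := by
    set ω := aNumRad A Y with hω
    have hC : IsClosed {u : Ksp B | ‖(inner ℂ (W u) u : ℂ)‖ ≤ ω * ‖u‖ ^ 2} := by
      refine isClosed_le ?_ ?_
      · exact Continuous.norm (Continuous.inner W.continuous continuous_id)
      · exact (continuous_const.mul ((continuous_norm).pow 2))
    have hsub : Set.range (fun x : H => (⟨B x, hmemK B x⟩ : Ksp B)) ⊆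
        {u : Ksp B | ‖(inner ℂ (W u) u : ℂ)‖ ≤ ω * ‖u‖ ^ 2} := by
      rintro _ ⟨x, rfl⟩
      show ‖(inner ℂ (W ⟨B x, hmemK B x⟩) (⟨B x, hmemK B x⟩ : Ksp B) : ℂ)‖
        ≤ ω * ‖(⟨B x, hmemK B x⟩ : Ksp B)‖ ^ 2
      have hin : (inner ℂ (W ⟨B x, hmemK B x⟩) (⟨B x, hmemK B x⟩ : Ksp B) : ℂ)
          = inner ℂ (B (Y x)) (B x) := by
        rw [Submodule.coe_inner, hW x]
      have hnrm : ‖(⟨B x, hmemK B x⟩ : Ksp B)‖ = anorm A x := by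
        rw [anorm_eq hBsa hBB]; rfl
      rw [hin, hnrm, ← inner_eq hBsa hBB]
      exact norm_inner_le_aNumRad hBsa hBB hY x
    intro u
    exact hC.closure_subset_iff.2 hsub (dense_BK B u)
  have hsp := spectralRadius_le_of_inner W (aNumRad_nonneg A Y) hnum
  refine le_of_forall_pos_le_add fun ε hε => ?_
  obtain ⟨n, hn, hle⟩ := exists_pow_rpow_le W (aNumRad_nonneg A Y) hsp hε
  have h1 : aSpecRad A Y ≤ aNorm A (Y ^ ((⟨n, hn⟩ : ℕ+) : ℕ)) ^ ((((⟨n, hn⟩ : ℕ+) : ℕ) : ℝ)⁻¹) :=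
    ciInf_le (bddBelow_specSet A Y) (⟨n, hn⟩ : ℕ+)
  calc aSpecRad A Y ≤ aNorm A (Y ^ n) ^ ((n : ℝ)⁻¹) := h1
    _ ≤ ‖W ^ n‖ ^ ((n : ℝ)⁻¹) := by
        exact Real.rpow_le_rpow (aNorm_nonneg _ _) (hnorm n) (by positivity)
    _ ≤ aNumRad A Y + ε := hle

end Stmt17

/-- for commuting `A`-bounded `T, S`, two refined bounds for `r_A(TS)`. -/
theorem stmt17 (A T S : H →L[ℂ] H) (hA : A.IsPositive)
    (hT : ABounded A T) (hS : ABounded A S) (hc : T * S = S * T) :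
    aSpecRad A (T * S) ≤
      (aNumRad A (T * S) +
        Real.sqrt (aNorm A T) * Real.sqrt (aNorm A S) * Real.sqrt (aNorm A (T * S))) / 2 ∧
    aSpecRad A (T * S) ≤
      (aNumRad A (T * S) +
        min (aNorm A T * Real.sqrt (aNorm A (S ^ 2)))
          (Real.sqrt (aNorm A (T ^ 2)) * aNorm A S)) / 2 := by
  classical
  open Stmt17 in
  have h0A : (0 : H →L[ℂ] H) ≤ A := (ContinuousLinearMap.nonneg_iff_isPositive A).2 hA
  set B : H →L[ℂ] H := CFC.sqrt A with hBdef
  have hBB : B * B = A := CFC.sqrt_mul_sqrt_self A h0A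
  have hBsa : IsSelfAdjoint B :=
    ((ContinuousLinearMap.nonneg_iff_isPositive B).1 (CFC.sqrt_nonneg (a := A))).isSelfAdjoint
  have hYb : ABounded A (T * S) := hT.mul hS
  have hω : aSpecRad A (T * S) ≤ aNumRad A (T * S) := Stmt17.aSpecRad_le_aNumRad hBsa hBB hYb
  have hr2 : aSpecRad A (T * S) ≤ aNorm A ((T * S) ^ 2) ^ ((2:ℝ)⁻¹) := by
    have h := ciInf_le (Stmt17.bddBelow_specSet A (T * S)) (2 : ℕ+)
    simpa [aSpecRad] using h
  have sqrt_from : ∀ a : ℝ, aNorm A ((T * S) ^ 2) ≤ a → aSpecRad A (T * S) ≤ Real.sqrt a := by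
    intro a hle
    calc aSpecRad A (T * S) ≤ aNorm A ((T * S) ^ 2) ^ ((2:ℝ)⁻¹) := hr2
      _ ≤ a ^ ((2:ℝ)⁻¹) :=
          Real.rpow_le_rpow (Stmt17.aNorm_nonneg _ _) hle (by norm_num)
      _ = Real.sqrt a := by rw [Real.sqrt_eq_rpow, one_div]
  have aT0 := Stmt17.aNorm_nonneg A T
  have aS0 := Stmt17.aNorm_nonneg A S
  have aY0 := Stmt17.aNorm_nonneg A (T * S)
  -- algebraic identities
  have e1 : (T * S) ^ 2 = T * (S * (T * S)) := by rw [pow_two, mul_assoc]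
  have e2 : (T * S) ^ 2 = T * (T * (S * S)) := by
    rw [pow_two, mul_assoc T S (T * S), ← mul_assoc S T S, ← hc, mul_assoc T S S]
  have e3 : (T * S) ^ 2 = ((T * T) * S) * S := by
    rw [pow_two, ← mul_assoc (T * S) T S, mul_assoc T S T, ← hc, ← mul_assoc T T S]
  -- bound 1
  have b1 : aNorm A ((T * S) ^ 2) ≤ aNorm A T * (aNorm A S * aNorm A (T * S)) := by
    rw [e1]
    calc aNorm A (T * (S * (T * S))) ≤ aNorm A T * aNorm A (S * (T * S)) :=
          Stmt17.aNorm_mul_le hT (hS.mul hYb)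
      _ ≤ aNorm A T * (aNorm A S * aNorm A (T * S)) :=
          mul_le_mul_of_nonneg_left (Stmt17.aNorm_mul_le hS hYb) aT0
  have hX1 : aSpecRad A (T * S) ≤ Real.sqrt (aNorm A T) * Real.sqrt (aNorm A S)
      * Real.sqrt (aNorm A (T * S)) := by
    have := sqrt_from _ b1
    rwa [Real.sqrt_mul aT0, Real.sqrt_mul aS0, ← mul_assoc] at this
  -- bound 2
  have b2 : aNorm A ((T * S) ^ 2) ≤ aNorm A T ^ 2 * aNorm A (S ^ 2) := by
    rw [e2]
    have hSS : (S : H →L[ℂ] H) * S = S ^ 2 := (pow_two S).symm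
    calc aNorm A (T * (T * (S * S))) ≤ aNorm A T * aNorm A (T * (S * S)) :=
          Stmt17.aNorm_mul_le hT (hT.mul (hS.mul hS))
      _ ≤ aNorm A T * (aNorm A T * aNorm A (S * S)) :=
          mul_le_mul_of_nonneg_left (Stmt17.aNorm_mul_le hT (hS.mul hS)) aT0
      _ = aNorm A T ^ 2 * aNorm A (S ^ 2) := by rw [hSS]; ring
  have hm1 : aSpecRad A (T * S) ≤ aNorm A T * Real.sqrt (aNorm A (S ^ 2)) := by
    have := sqrt_from _ b2
    rwa [Real.sqrt_mul (sq_nonneg _), Real.sqrt_sq aT0] at this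
  -- bound 3
  have b3 : aNorm A ((T * S) ^ 2) ≤ aNorm A (T ^ 2) * aNorm A S ^ 2 := by
    rw [e3]
    have hTT : (T : H →L[ℂ] H) * T = T ^ 2 := (pow_two T).symm
    calc aNorm A (((T * T) * S) * S) ≤ aNorm A ((T * T) * S) * aNorm A S :=
          Stmt17.aNorm_mul_le ((hT.mul hT).mul hS) hS
      _ ≤ (aNorm A (T * T) * aNorm A S) * aNorm A S :=
          mul_le_mul_of_nonneg_right (Stmt17.aNorm_mul_le (hT.mul hT) hS) aS0
      _ = aNorm A (T ^ 2) * aNorm A S ^ 2 := by rw [hTT]; ring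
  have hm2 : aSpecRad A (T * S) ≤ Real.sqrt (aNorm A (T ^ 2)) * aNorm A S := by
    have := sqrt_from _ b3
    rwa [Real.sqrt_mul (Stmt17.aNorm_nonneg _ _), Real.sqrt_sq aS0] at this
  have hmin : aSpecRad A (T * S) ≤ min (aNorm A T * Real.sqrt (aNorm A (S ^ 2)))
      (Real.sqrt (aNorm A (T ^ 2)) * aNorm A S) := le_min hm1 hm2
  constructor
  · linarith
  · linarith
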